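/- For every κ ∈ ℂ and every Fricke trace map φ of level κ, the set of end invariants ℰ(φ) is a closed subset of ℝ̂. -/

import Mathlib

open Filter Topology

noncomputable section

namespace TWZ

/-- `ℚ̂ = ℚ ∪ {∞}`, modeling essential simple closed curves on the one-holed torus. -/
abbrev QHat := OnePoint ℚ

/-- `ℝ̂ = ℝ ∪ {∞}`, the circle (one-point compactification of `ℝ`),
modeling the projective lamination space. -/
abbrev RHat := OnePoint ℝ

/-- Numerator of an extended rational, with `∞ = 1/0`. -/
def qnum (x : QHat) : ℤ := @Option.elim ℚ ℤ x 1 Rat.num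

/-- Denominator of an extended rational, with `∞ = 1/0`. -/
def qden (x : QHat) : ℤ := @Option.elim ℚ ℤ x 0 (fun q => (q.den : ℤ))

/-- The natural inclusion `ℚ̂ → ℝ̂`. -/
def toRHat (x : QHat) : RHat := @Option.map ℚ ℝ (fun q => (q : ℝ)) x

/-- Farey neighbors: `p/q` and `r/s` (in lowest terms) with `|ps - qr| = 1`. -/
def FareyNbr (a b : QHat) : Prop := |qnum a * qden b - qnum b * qden a| = 1

/-- A Farey triangle: three pairwise Farey neighbors. -/
def FareyTriangle (x y z : QHat) : Prop := FareyNbr x y ∧ FareyNbr y z ∧ FareyNbr x z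

/-- A Fricke trace map of level `κ`: the vertex relation on Farey triangles and
the edge relation on Farey edges with their two opposite vertices. -/
def IsFricke (κ : ℂ) (φ : QHat → ℂ) : Prop :=
  (∀ x y z : QHat, FareyTriangle x y z →
    φ x ^ 2 + φ y ^ 2 + φ z ^ 2 - φ x * φ y * φ z - 2 = κ) ∧
  (∀ x y z z' : QHat, FareyTriangle x y z → FareyTriangle x y z' → z ≠ z' →
    φ z + φ z' = φ x * φ y)

/-- `lam ∈ ℝ̂` is an end invariant of `φ` : there are `K > 0` and pairwise distinct
`X_n ∈ ℚ̂` with `X_n → lam` and `|φ (X_n)| ≤ K` for all `n`. -/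
def IsEndInv (φ : QHat → ℂ) (lam : RHat) : Prop :=
  ∃ K : ℝ, 0 < K ∧ ∃ s : ℕ → QHat, Function.Injective s ∧
    Tendsto (fun n => toRHat (s n)) atTop (nhds lam) ∧
    ∀ n, ‖φ (s n)‖ ≤ K

/-- The set `ℰ(φ) ⊆ ℝ̂` of end invariants of `φ`. -/
def endInvs (φ : QHat → ℂ) : Set RHat := {lam | IsEndInv φ lam}

/-- `φ` is dihedral: it vanishes on two of the three vertices of some Farey triangle. -/
def IsDihedral (φ : QHat → ℂ) : Prop :=
  ∃ x y z : QHat, FareyTriangle x y z ∧ φ x = 0 ∧ φ y = 0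

/-- `φ` is of SU(2) type: all values are real and lie in `[-2, 2]`. -/
def IsSU2Type (φ : QHat → ℂ) : Prop :=
  ∀ x : QHat, ∃ r : ℝ, -2 ≤ r ∧ r ≤ 2 ∧ φ x = r

/-- `φ` is real: all its values are real. -/
def IsRealMap (φ : QHat → ℂ) : Prop := ∀ x : QHat, ∃ r : ℝ, φ x = r

/-- The extended BQ-conditions on a subset `S ⊆ ℚ̂`: no value on `S` lies in the real
open interval `(-2,2)`, and only finitely many values on `S` have absolute value `≤ 2`. -/
def ExtendedBQ (φ : QHat → ℂ) (S : Set QHat) : Prop :=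
  (∀ x ∈ S, ¬ ∃ r : ℝ, -2 < r ∧ r < 2 ∧ φ x = r) ∧
  {x ∈ S | ‖φ x‖ ≤ 2}.Finite

/-- A Cantor subset of `ℝ̂`: nonempty, compact, perfect and totally disconnected. -/
def IsCantorSet (C : Set RHat) : Prop :=
  C.Nonempty ∧ IsCompact C ∧ Perfect C ∧ IsTotallyDisconnected C

/-- Parity class odd/odd. -/
def classOO : Set QHat := {x | Odd (qnum x) ∧ Odd (qden x)}

/-- Parity class even/odd. -/
def classEO : Set QHat := {x | Even (qnum x) ∧ Odd (qden x)}

/-- Parity class odd/even. -/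
def classOE : Set QHat := {x | Odd (qnum x) ∧ Even (qden x)}

/-- `φ` is imaginary: not dihedral, real on one of the three parity classes and
purely imaginary on the other two. -/
def IsImaginary (φ : QHat → ℂ) : Prop :=
  ¬ IsDihedral φ ∧
  ∃ S ∈ ({classOO, classEO, classOE} : Set (Set QHat)),
    (∀ x ∈ S, (φ x).im = 0) ∧ (∀ x ∉ S, (φ x).re = 0)


/-! ### Auxiliary development -/

section Aux

@[simp] lemma qnum_some (q : ℚ) : qnum (some q) = q.num := rfl
@[simp] lemma qden_some (q : ℚ) : qden (some q) = (q.den : ℤ) := rfl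
@[simp] lemma qnum_none : qnum (none : QHat) = 1 := rfl
@[simp] lemma qden_none : qden (none : QHat) = 0 := rfl
@[simp] lemma qnum_coe (q : ℚ) : qnum (q : QHat) = q.num := rfl
@[simp] lemma qden_coe (q : ℚ) : qden (q : QHat) = (q.den : ℤ) := rfl

lemma coe_qhat (q : ℚ) : (q : QHat) = some q := rfl

lemma qden_nonneg (z : QHat) : 0 ≤ qden z := by
  cases z with
  | none => simp
  | some q => simp

lemma qden_pos_of_some (q : ℚ) : 0 < qden (some q) := by
  simpa using Int.natCast_pos.mpr q.pos

lemma qden_eq_zero_iff {z : QHat} : qden z = 0 ↔ z = none := by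
  cases z with
  | none => simp; rfl
  | some q =>
      simp only [qden_some]
      constructor
      · intro h; exfalso; have := q.den_nz; omega
      · intro h; exact absurd h (Option.some_ne_none q)

lemma qhat_ext {z z' : QHat} (hn : qnum z = qnum z') (hd : qden z = qden z') : z = z' := by
  cases z with
  | none =>
      cases z' with
      | none => rfl
      | some q =>
          exfalso; have hq := q.den_nz
          simp only [qden_none, qden_some] at hd; omega
  | some q =>
      cases z' with
      | none =>
          exfalso; have hq := q.den_nz
          simp only [qden_none, qden_some] at hd; omega
      | some q' =>
          simp only [qnum_some, qden_some] at hn hd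
          exact congrArg some (Rat.ext hn (by exact_mod_cast hd))

lemma rat_lt_iff (a b : ℚ) : a < b ↔ a.num * (b.den : ℤ) < b.num * (a.den : ℤ) := by
  have ha : (0:ℚ) < (a.den : ℚ) := by exact_mod_cast a.pos
  have hb : (0:ℚ) < (b.den : ℚ) := by exact_mod_cast b.pos
  calc a < b ↔ (a.num : ℚ)/(a.den : ℚ) < (b.num : ℚ)/(b.den : ℚ) := by
        rw [Rat.num_div_den, Rat.num_div_den]
    _ ↔ (a.num : ℚ) * (b.den : ℚ) < (b.num : ℚ) * (a.den : ℚ) := div_lt_div_iff₀ ha hb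
    _ ↔ _ := by exact_mod_cast Iff.rfl

/-- Ordered Farey pair: `a < b` with determinant one. -/
def FI (a b : ℚ) : Prop := b.num * (a.den : ℤ) - a.num * (b.den : ℤ) = 1

lemma FI.lt {a b : ℚ} (h : FI a b) : a < b := by
  unfold FI at h; rw [rat_lt_iff]; omega

/-- The mediant of two rationals. -/
def med (a b : ℚ) : ℚ := ((a.num + b.num : ℤ) : ℚ) / ((a.den + b.den : ℤ) : ℚ)

lemma med_denpos (a b : ℚ) : (0:ℤ) < (a.den : ℤ) + (b.den : ℤ) := by
  have ha := a.pos; have hb := b.pos; positivity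

lemma med_coprime {a b : ℚ} (h : FI a b) :
    Nat.Coprime (a.num + b.num).natAbs ((a.den : ℤ) + (b.den : ℤ)).natAbs := by
  have : IsCoprime (a.num + b.num) ((a.den : ℤ) + (b.den : ℤ)) :=
    ⟨(a.den : ℤ), -a.num, by unfold FI at h; linear_combination h⟩
  exact Int.isCoprime_iff_gcd_eq_one.mp this

lemma med_num {a b : ℚ} (h : FI a b) : (med a b).num = a.num + b.num := by
  unfold med
  rw [show ((a.den + b.den : ℤ) : ℚ) = (((a.den:ℤ) + (b.den:ℤ) : ℤ) : ℚ) by push_cast; ring]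
  exact Rat.num_div_eq_of_coprime (med_denpos a b) (med_coprime h)

lemma med_den {a b : ℚ} (h : FI a b) : ((med a b).den : ℤ) = (a.den : ℤ) + (b.den : ℤ) := by
  unfold med
  rw [show ((a.den + b.den : ℤ) : ℚ) = (((a.den:ℤ) + (b.den:ℤ) : ℤ) : ℚ) by push_cast; ring]
  exact Rat.den_div_eq_of_coprime (med_denpos a b) (med_coprime h)

lemma FI.med_left {a b : ℚ} (h : FI a b) : FI a (med a b) := by
  have h' := h; unfold FI at *
  rw [med_num h', med_den h']; linear_combination h

lemma FI.med_right {a b : ℚ} (h : FI a b) : FI (med a b) b := by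
  have h' := h; unfold FI at *
  rw [med_num h', med_den h']; linear_combination h

lemma med_gt {a b : ℚ} (h : FI a b) : a < med a b := h.med_left.lt
lemma med_lt {a b : ℚ} (h : FI a b) : med a b < b := h.med_right.lt

lemma nbr_coe_iff (a b : ℚ) :
    FareyNbr (a : QHat) (b : QHat) ↔ |a.num * (b.den:ℤ) - b.num * (a.den:ℤ)| = 1 := Iff.rfl

lemma FI.nbr {a b : ℚ} (h : FI a b) : FareyNbr (a : QHat) (b : QHat) := by
  rw [nbr_coe_iff]
  unfold FI at h
  have : a.num * (b.den:ℤ) - b.num * (a.den:ℤ) = -1 := by omega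
  rw [this]; decide

lemma nbr_symm {a b : QHat} (h : FareyNbr a b) : FareyNbr b a := by
  unfold FareyNbr at *
  rw [abs_sub_comm] at h; exact h

end Aux

section Aux2

lemma ioo_ineq1 {x q : ℚ} (h : x < q) : 1 ≤ q.num * (x.den:ℤ) - x.num * (q.den:ℤ) := by
  rw [rat_lt_iff] at h; omega

lemma ioo_iden {x y q : ℚ} (hxy : FI x y) :
    (q.num * (x.den:ℤ) - x.num * (q.den:ℤ)) * (y.den:ℤ)
      + (y.num * (q.den:ℤ) - q.num * (y.den:ℤ)) * (x.den:ℤ) = (q.den:ℤ) := by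
  unfold FI at hxy; linear_combination (q.den:ℤ) * hxy

lemma ioo_den_ge {x y q : ℚ} (hxy : FI x y) (h1 : x < q) (h2 : q < y) :
    (x.den:ℤ) + (y.den:ℤ) ≤ (q.den:ℤ) := by
  have hA := ioo_ineq1 h1
  have hB : 1 ≤ y.num * (q.den:ℤ) - q.num * (y.den:ℤ) := by rw [rat_lt_iff] at h2; omega
  have hI := ioo_iden (q := q) hxy
  have hx : (1:ℤ) ≤ (x.den:ℤ) := by exact_mod_cast x.pos
  have hy : (1:ℤ) ≤ (y.den:ℤ) := by exact_mod_cast y.pos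
  nlinarith [hA, hB, hx, hy]

lemma FI.triangle_med {x y : ℚ} (h : FI x y) :
    FareyTriangle (x : QHat) (y : QHat) ((med x y : ℚ) : QHat) :=
  ⟨h.nbr, nbr_symm h.med_right.nbr, h.med_left.nbr⟩

lemma opp_cases {x y : ℚ} (hxy : FI x y) {z : QHat}
    (h1 : FareyNbr (x:QHat) z) (h2 : FareyNbr z (y:QHat)) :
    z = ((med x y : ℚ) : QHat)
      ∨ (qnum z = x.num - y.num ∧ qden z = (x.den:ℤ) - (y.den:ℤ))
      ∨ (qnum z = y.num - x.num ∧ qden z = (y.den:ℤ) - (x.den:ℤ)) := by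
  have hxy' := hxy; unfold FI at hxy'
  have hα : |x.num * qden z - qnum z * (x.den:ℤ)| = 1 := h1
  have hβ' : |qnum z * (y.den:ℤ) - y.num * qden z| = 1 := h2
  have hβ : |y.num * qden z - qnum z * (y.den:ℤ)| = 1 := by rw [abs_sub_comm] at hβ'; exact hβ'
  have hu : qnum z = (y.num * qden z - qnum z * (y.den:ℤ)) * x.num
      - (x.num * qden z - qnum z * (x.den:ℤ)) * y.num := by
    linear_combination (-(qnum z)) * hxy'
  have ht : qden z = (y.num * qden z - qnum z * (y.den:ℤ)) * (x.den:ℤ)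
      - (x.num * qden z - qnum z * (x.den:ℤ)) * (y.den:ℤ) := by
    linear_combination (-(qden z)) * hxy'
  have hαc : x.num * qden z - qnum z * (x.den:ℤ) = 1 ∨
      x.num * qden z - qnum z * (x.den:ℤ) = -1 := by
    rcases (abs_eq (by norm_num : (0:ℤ) ≤ 1)).mp hα with h | h
    · exact Or.inl h
    · exact Or.inr h
  have hβc : y.num * qden z - qnum z * (y.den:ℤ) = 1 ∨
      y.num * qden z - qnum z * (y.den:ℤ) = -1 := by
    rcases (abs_eq (by norm_num : (0:ℤ) ≤ 1)).mp hβ with h | h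
    · exact Or.inl h
    · exact Or.inr h
  have hxd : (1:ℤ) ≤ (x.den:ℤ) := by exact_mod_cast x.pos
  have hyd : (1:ℤ) ≤ (y.den:ℤ) := by exact_mod_cast y.pos
  have htnn := qden_nonneg z
  rcases hαc with hA | hA <;> rcases hβc with hB | hB
  · -- (1,1) : branch 2
    rw [hA, hB] at hu ht
    right; left; constructor <;> omega
  · -- (1,-1) : t negative, impossible
    rw [hA, hB] at hu ht
    exfalso; omega
  · -- (-1,1) : mediant
    rw [hA, hB] at hu ht
    left
    refine qhat_ext ?_ ?_
    · rw [qnum_coe, med_num hxy]; omega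
    · rw [qden_coe, med_den hxy]; omega
  · -- (-1,-1) : branch 3
    rw [hA, hB] at hu ht
    right; right; constructor <;> omega

lemma opp_unique {x y : ℚ} (hxy : FI x y) {z z' : QHat}
    (h1 : FareyNbr (x:QHat) z) (h2 : FareyNbr z (y:QHat))
    (h1' : FareyNbr (x:QHat) z') (h2' : FareyNbr z' (y:QHat))
    (hz : z ≠ ((med x y : ℚ) : QHat)) (hz' : z' ≠ ((med x y : ℚ) : QHat)) : z = z' := by
  have hxd : (1:ℤ) ≤ (x.den:ℤ) := by exact_mod_cast x.pos
  have hyd : (1:ℤ) ≤ (y.den:ℤ) := by exact_mod_cast y.pos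
  have htnn := qden_nonneg z
  have htnn' := qden_nonneg z'
  rcases opp_cases hxy h1 h2 with h | h | h
  · exact absurd h hz
  all_goals rcases opp_cases hxy h1' h2' with h' | h' | h'
  · exact absurd h' hz'
  · exact qhat_ext (h.1.trans h'.1.symm) (h.2.trans h'.2.symm)
  · -- mixed signs: forces both denominators zero
    have hz0 : qden z = 0 := by omega
    have hz0' : qden z' = 0 := by omega
    rw [qden_eq_zero_iff.mp hz0, qden_eq_zero_iff.mp hz0']
  · exact absurd h' hz'
  · have hz0 : qden z = 0 := by omega
    have hz0' : qden z' = 0 := by omega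
    rw [qden_eq_zero_iff.mp hz0, qden_eq_zero_iff.mp hz0']
  · exact qhat_ext (h.1.trans h'.1.symm) (h.2.trans h'.2.symm)

lemma coe_ne_of_den_ne {p q : ℚ} (h : p.den ≠ q.den) : (p : QHat) ≠ (q : QHat) := by
  intro hc
  exact h (congrArg Rat.den (Option.some_injective ℚ hc))

end Aux2

section Phi

variable {φ : QHat → ℂ}

/-- A valid state: a Farey interval `(x,y)` together with the opposite vertex `z`
of the edge `(x,y)` on the outside. -/
def ValidT (x y : ℚ) (z : QHat) : Prop :=
  FI x y ∧ FareyTriangle (x : QHat) (y : QHat) z ∧ z ≠ ((med x y : ℚ) : QHat)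

/-- Max of the two endpoint trace values. -/
def maxv (φ : QHat → ℂ) (x y : ℚ) : ℝ :=
  max (‖φ (x : QHat)‖) (‖φ (y : QHat)‖)

variable (hφ : ∀ x y z z' : QHat, FareyTriangle x y z → FareyTriangle x y z' → z ≠ z' →
  φ z + φ z' = φ x * φ y)

include hφ in
lemma med_eq {x y : ℚ} {z : QHat} (h : ValidT x y z) :
    φ ((med x y : ℚ) : QHat) = φ (x : QHat) * φ (y : QHat) - φ z := by
  have key := hφ (x : QHat) (y : QHat) ((med x y : ℚ) : QHat) z h.1.triangle_med h.2.1
    (Ne.symm h.2.2)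
  linear_combination key

lemma ValidT.left {x y : ℚ} {z : QHat} (h : ValidT x y z) : ValidT x (med x y) (y : QHat) := by
  obtain ⟨hxy, _, _⟩ := h
  refine ⟨hxy.med_left, ⟨hxy.med_left.nbr, hxy.med_right.nbr, hxy.nbr⟩, ?_⟩
  apply coe_ne_of_den_ne
  have h1 := med_den hxy
  have h2 := med_den hxy.med_left
  have := x.pos
  omega

lemma ValidT.right {x y : ℚ} {z : QHat} (h : ValidT x y z) : ValidT (med x y) y (x : QHat) := by
  obtain ⟨hxy, _, _⟩ := h
  refine ⟨hxy.med_right, ⟨hxy.med_right.nbr, nbr_symm hxy.nbr, nbr_symm hxy.med_left.nbr⟩, ?_⟩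
  apply coe_ne_of_den_ne
  have h1 := med_den hxy
  have h2 := med_den hxy.med_right
  have := y.pos
  omega

/-- A winning state: valid, both endpoint values at least 3, outside value dominated. -/
def WinV (φ : QHat → ℂ) (x y : ℚ) (z : QHat) : Prop :=
  ValidT x y z ∧ 3 ≤ ‖φ (x : QHat)‖ ∧ 3 ≤ ‖φ (y : QHat)‖ ∧
    ‖φ z‖ ≤ maxv φ x y

lemma prod_ge_3max {a b : ℝ} (ha : 3 ≤ a) (hb : 3 ≤ b) : 3 * max a b ≤ a * b := by
  rcases max_cases a b with ⟨h1, h2⟩ | ⟨h1, h2⟩ <;> rw [h1] <;> nlinarith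

include hφ in
lemma med_big {x y : ℚ} {z : QHat} (h : WinV φ x y z) :
    2 * maxv φ x y ≤ ‖φ ((med x y : ℚ) : QHat)‖ := by
  obtain ⟨hv, hx, hy, hz⟩ := h
  rw [med_eq hφ hv]
  have h1 := norm_sub_norm_le (φ (x : QHat) * φ (y : QHat)) (φ z)
  rw [norm_mul] at h1
  have h2 := prod_ge_3max hx hy
  unfold maxv at *
  linarith

include hφ in
lemma WinV.split_left {x y : ℚ} {z : QHat} (h : WinV φ x y z) :
    WinV φ x (med x y) (y : QHat) ∧ 2 * maxv φ x y ≤ maxv φ x (med x y) := by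
  have hbig := med_big hφ h
  obtain ⟨hv, hx, hy, hz⟩ := h
  have hmx : maxv φ x y ≥ 3 := le_trans hx (le_max_left _ _)
  constructor
  · refine ⟨hv.left, hx, by linarith, ?_⟩
    have : ‖φ (y : QHat)‖ ≤ maxv φ x y := le_max_right _ _
    have h2 : ‖φ ((med x y : ℚ) : QHat)‖ ≤ maxv φ x (med x y) := le_max_right _ _
    unfold maxv at *
    linarith
  · exact le_trans hbig (le_max_right _ _)

include hφ in
lemma WinV.split_right {x y : ℚ} {z : QHat} (h : WinV φ x y z) :
    WinV φ (med x y) y (x : QHat) ∧ 2 * maxv φ x y ≤ maxv φ (med x y) y := by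
  have hbig := med_big hφ h
  obtain ⟨hv, hx, hy, hz⟩ := h
  have hmx : maxv φ x y ≥ 3 := le_trans hx (le_max_left _ _)
  constructor
  · refine ⟨hv.right, by linarith, hy, ?_⟩
    have : ‖φ (x : QHat)‖ ≤ maxv φ x y := le_max_left _ _
    have h2 : ‖φ ((med x y : ℚ) : QHat)‖ ≤ maxv φ (med x y) y := le_max_left _ _
    unfold maxv at *
    linarith
  · exact le_trans hbig (le_max_left _ _)

include hφ in
lemma grow (n : ℕ) : ∀ (x y : ℚ) (z : QHat) (q : ℚ), WinV φ x y z → x < q → q < y →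
    (q.den : ℤ) ≤ (n : ℤ) + (x.den : ℤ) + (y.den : ℤ) →
    2 * maxv φ x y ≤ ‖φ (q : QHat)‖ := by
  induction n using Nat.strong_induction_on with
  | _ n IH =>
  intro x y z q hw h1 h2 hden
  have hxy := hw.1.1
  rcases lt_trichotomy q (med x y) with hlt | heq | hgt
  · obtain ⟨hw', hmax'⟩ := hw.split_left hφ
    have hden2 := ioo_den_ge hxy.med_left h1 hlt
    rw [med_den hxy] at hden2
    have hx1 := x.pos
    have hy1 := y.pos
    have hxden : x.den ≤ n := by omega
    have hxdpos := x.pos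
    have hrec := IH (n - x.den) (by omega) x (med x y) (y : QHat) q hw' h1 hlt
      (by rw [med_den hxy, Nat.cast_sub hxden]; omega)
    have : maxv φ x y ≤ maxv φ x (med x y) := by linarith [le_trans (le_trans hw.2.1 (le_max_left (‖φ (x:QHat)‖) (‖φ (y:QHat)‖))) (le_refl (maxv φ x y))]
    linarith
  · rw [heq]
    exact med_big hφ hw
  · obtain ⟨hw', hmax'⟩ := hw.split_right hφ
    have hden2 := ioo_den_ge hxy.med_right hgt h2
    rw [med_den hxy] at hden2
    have hx1 := x.pos
    have hy1 := y.pos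
    have hyden : y.den ≤ n := by omega
    have hrec := IH (n - y.den) (by omega) (med x y) y (x : QHat) q hw' hgt h2
      (by rw [med_den hxy, Nat.cast_sub hyden]; omega)
    have hmge3 : 3 ≤ maxv φ x y := le_trans hw.2.1 (le_max_left _ _)
    linarith

end Phi

section Descent

variable {φ : QHat → ℂ} {Y : ℕ → QHat} {K : ℝ}

/-- Indices of the sequence falling inside a rational interval. -/
def Sxy (Y : ℕ → QHat) (x y : ℚ) : Set ℕ := {j | ∃ q : ℚ, Y j = (q : QHat) ∧ x < q ∧ q < y}

lemma split_infinite (hYinj : Function.Injective Y) {x y : ℚ}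
    (h : (Sxy Y x y).Infinite) :
    (Sxy Y x (med x y)).Infinite ∨ (Sxy Y (med x y) y).Infinite := by
  by_contra hc
  push_neg at hc
  have hmid : ({j | Y j = ((med x y : ℚ) : QHat)} : Set ℕ).Finite := by
    apply Set.Subsingleton.finite
    intro a ha b hb
    exact hYinj (ha.trans hb.symm)
  have hsub : Sxy Y x y ⊆ (Sxy Y x (med x y) ∪ {j | Y j = ((med x y : ℚ) : QHat)})
      ∪ Sxy Y (med x y) y := by
    rintro j ⟨q, hq, h1, h2⟩
    rcases lt_trichotomy q (med x y) with hl | he | hg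
    · exact Or.inl (Or.inl ⟨q, hq, h1, hl⟩)
    · exact Or.inl (Or.inr (by rw [← he]; exact hq))
    · exact Or.inr ⟨q, hq, hg, h2⟩
  exact h (Set.Finite.subset (((hc.1.union hmid).union hc.2)) hsub)

variable (hφ : ∀ x y z z' : QHat, FareyTriangle x y z → FareyTriangle x y z' → z ≠ z' →
  φ z + φ z' = φ x * φ y)
  (hYinj : Function.Injective Y)
  (hK : ∀ j, ‖φ (Y j)‖ ≤ K)

include hφ hYinj in
lemma deep_states {x y : ℚ} {z : QHat} (hw : WinV φ x y z) (hinf : (Sxy Y x y).Infinite) :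
    ∀ k : ℕ, ∃ (x' y' : ℚ) (z' : QHat), WinV φ x' y' z' ∧ (Sxy Y x' y').Infinite ∧
      3 * 2 ^ k ≤ maxv φ x' y' := by
  intro k
  induction k with
  | zero =>
      refine ⟨x, y, z, hw, hinf, ?_⟩
      have h3 : 3 ≤ maxv φ x y := le_trans hw.2.1 (le_max_left _ _)
      simpa using h3
  | succ k IH =>
      obtain ⟨a, b, c, hw', hinf', hval⟩ := IH
      rcases split_infinite hYinj hinf' with h | h
      · obtain ⟨hw2, hm2⟩ := hw'.split_left hφ
        refine ⟨a, med a b, (b : QHat), hw2, h, ?_⟩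
        rw [pow_succ]; linarith
      · obtain ⟨hw2, hm2⟩ := hw'.split_right hφ
        refine ⟨med a b, b, (a : QHat), hw2, h, ?_⟩
        rw [pow_succ]; linarith

include hφ hYinj hK in
lemma deep {x y : ℚ} {z : QHat} (hw : WinV φ x y z) (hinf : (Sxy Y x y).Infinite) : False := by
  obtain ⟨k, hk⟩ := pow_unbounded_of_one_lt K (by norm_num : (1:ℝ) < 2)
  obtain ⟨a, b, c, hw', hinf', hval⟩ := deep_states hφ hYinj hw hinf k
  obtain ⟨j, q, hq, h1, h2⟩ := hinf'.nonempty
  have hg := grow hφ q.den a b c q hw' h1 h2 (by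
    have := a.pos; have := b.pos; omega)
  have hKj := hK j
  rw [hq] at hKj
  have h2k : (0:ℝ) < 2 ^ k := by positivity
  linarith

include hφ hYinj hK in
lemma descend : ∀ n : ℕ, ∀ (x y : ℚ) (z : QHat), ValidT x y z →
    (∀ q : ℚ, x ≤ q → q ≤ y → 3 < ‖φ (q : QHat)‖) →
    (Sxy Y x y).Infinite → maxv φ x y < ‖φ z‖ →
    ‖φ z‖ ≤ 3 * 2 ^ n → False := by
  intro n
  induction n with
  | zero =>
      intro x y z hv H1 hinf hlose hbound
      have hx := H1 x le_rfl hv.1.lt.le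
      have hmx : ‖φ (x:QHat)‖ ≤ maxv φ x y := le_max_left _ _
      norm_num at hbound
      linarith
  | succ n IH =>
      intro x y z hv H1 hinf hlose hbound
      have hxv := H1 x le_rfl hv.1.lt.le
      have hyv := H1 y hv.1.lt.le le_rfl
      have hmlt := med_lt hv.1
      have hmgt := med_gt hv.1
      have hmv := H1 (med x y) hmgt.le hmlt.le
      have hmeq := med_eq hφ hv
      have habs : ‖φ (x:QHat)‖ * ‖φ (y:QHat)‖
          - ‖φ ((med x y : ℚ):QHat)‖ ≤ ‖φ z‖ := by
        have h1 := norm_sub_norm_le (φ (x:QHat) * φ (y:QHat)) (φ ((med x y:ℚ):QHat))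
        rw [norm_mul] at h1
        have hz : φ z = φ (x:QHat) * φ (y:QHat) - φ ((med x y:ℚ):QHat) := by
          linear_combination hmeq
        rw [hz]; exact h1
      rcases split_infinite hYinj hinf with hL | hR
      · have hv' := hv.left
        have H1' : ∀ q : ℚ, x ≤ q → q ≤ med x y → 3 < ‖φ (q:QHat)‖ :=
          fun q hq1 hq2 => H1 q hq1 (le_trans hq2 hmlt.le)
        by_cases hwin : ‖φ (y:QHat)‖ ≤ maxv φ x (med x y)
        · exact deep hφ hYinj hK ⟨hv', hxv.le, hmv.le, hwin⟩ hL
        · push_neg at hwin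
          have hmle : ‖φ ((med x y:ℚ):QHat)‖ ≤ ‖φ (y:QHat)‖ := by
            have h2 : ‖φ ((med x y:ℚ):QHat)‖ ≤ maxv φ x (med x y) :=
              le_max_right _ _
            linarith
          have hkey : 2 * ‖φ (y:QHat)‖ ≤ ‖φ z‖ := by
            nlinarith [habs, hxv, hmle, norm_nonneg (φ (y:QHat))]
          refine IH x (med x y) (y:QHat) hv' H1' hL hwin ?_
          rw [pow_succ] at hbound; linarith
      · have hv' := hv.right
        have H1' : ∀ q : ℚ, med x y ≤ q → q ≤ y → 3 < ‖φ (q:QHat)‖ :=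
          fun q hq1 hq2 => H1 q (le_trans hmgt.le hq1) hq2
        by_cases hwin : ‖φ (x:QHat)‖ ≤ maxv φ (med x y) y
        · exact deep hφ hYinj hK ⟨hv', hmv.le, hyv.le, hwin⟩ hR
        · push_neg at hwin
          have hmle : ‖φ ((med x y:ℚ):QHat)‖ ≤ ‖φ (x:QHat)‖ := by
            have h2 : ‖φ ((med x y:ℚ):QHat)‖ ≤ maxv φ (med x y) y :=
              le_max_left _ _
            linarith
          have hkey : 2 * ‖φ (x:QHat)‖ ≤ ‖φ z‖ := by
            nlinarith [habs, hyv, hmle, norm_nonneg (φ (x:QHat))]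
          refine IH (med x y) y (x:QHat) hv' H1' hR hwin ?_
          rw [pow_succ] at hbound; linarith

include hφ hYinj hK in
lemma entry {x y : ℚ} {z : QHat} (hv : ValidT x y z)
    (H1 : ∀ q : ℚ, x ≤ q → q ≤ y → 3 < ‖φ (q : QHat)‖)
    (hinf : (Sxy Y x y).Infinite) : False := by
  by_cases hwin : ‖φ z‖ ≤ maxv φ x y
  · exact deep hφ hYinj hK
      ⟨hv, (H1 x le_rfl hv.1.lt.le).le, (H1 y hv.1.lt.le le_rfl).le, hwin⟩ hinf
  · push_neg at hwin
    obtain ⟨n, hn⟩ := pow_unbounded_of_one_lt (‖φ z‖) (by norm_num : (1:ℝ) < 2)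
    refine descend hφ hYinj hK n x y z hv H1 hinf hwin ?_
    have h2 : (0:ℝ) < 2^n := by positivity
    linarith

end Descent

section Find

variable {φ : QHat → ℂ} {Y : ℕ → QHat}

lemma valid_int (b : ℤ) : ValidT (b : ℚ) ((b + 1 : ℤ) : ℚ) (none : QHat) := by
  have hFI : FI (b : ℚ) ((b + 1 : ℤ) : ℚ) := by
    unfold FI
    rw [Rat.num_intCast, Rat.den_intCast, Rat.num_intCast, Rat.den_intCast]; ring
  refine ⟨hFI, ⟨hFI.nbr, ?_, ?_⟩, ?_⟩
  · show |qnum (((b + 1 : ℤ) : ℚ) : QHat) * qden (none : QHat)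
        - qnum (none : QHat) * qden (((b + 1 : ℤ) : ℚ) : QHat)| = 1
    rw [qnum_coe, qden_coe, qnum_none, qden_none, Rat.den_intCast]
    norm_num
  · show |qnum ((b : ℚ) : QHat) * qden (none : QHat)
        - qnum (none : QHat) * qden ((b : ℚ) : QHat)| = 1
    rw [qnum_coe, qden_coe, qnum_none, qden_none, Rat.den_intCast]
    norm_num
  · rw [coe_qhat]
    exact (Option.some_ne_none _).symm

lemma FI.sub_eq {x y : ℚ} (h : FI x y) : (y - x) * ((x.den:ℚ) * (y.den:ℚ)) = 1 := by
  have ex : (x:ℚ) * (x.den:ℚ) = (x.num:ℚ) := Rat.mul_den_eq_num x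
  have ey : (y:ℚ) * (y.den:ℚ) = (y.num:ℚ) := Rat.mul_den_eq_num y
  unfold FI at h
  have hc : (y.num:ℚ) * (x.den:ℚ) - (x.num:ℚ) * (y.den:ℚ) = 1 := by exact_mod_cast h
  linear_combination (x.den:ℚ) * ey - (y.den:ℚ) * ex + hc

lemma find_states (hYinj : Function.Injective Y) {x y : ℚ} {z : QHat}
    (hv : ValidT x y z) (hinf : (Sxy Y x y).Infinite) (k : ℕ) :
    ∃ (x' y' : ℚ) (z' : QHat), ValidT x' y' z' ∧ (Sxy Y x' y').Infinite ∧
      (k : ℤ) ≤ (x'.den : ℤ) * (y'.den : ℤ) ∧ x ≤ x' ∧ y' ≤ y := by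
  induction k with
  | zero => exact ⟨x, y, z, hv, hinf, by positivity, le_rfl, le_rfl⟩
  | succ k IH =>
      obtain ⟨a, b, c, hv', hinf', hprod, hxa, hby⟩ := IH
      have hab := hv'.1
      have hda : (1:ℤ) ≤ (a.den:ℤ) := by exact_mod_cast a.pos
      have hdb : (1:ℤ) ≤ (b.den:ℤ) := by exact_mod_cast b.pos
      rcases split_infinite hYinj hinf' with h | h
      · refine ⟨a, med a b, (b : QHat), hv'.left, h, ?_, hxa, le_trans (med_lt hab).le hby⟩
        rw [med_den hab]; push_cast; nlinarith
      · refine ⟨med a b, b, (a : QHat), hv'.right, h, ?_, le_trans hxa (med_gt hab).le, hby⟩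
        rw [med_den hab]; push_cast; nlinarith

lemma find_interval (hYinj : Function.Injective Y) {μ c d : ℝ} (hc : c < μ) (hd : μ < d)
    (htail : ∀ ε : ℝ, 0 < ε → ∃ N : ℕ, ∀ j ≥ N, ∃ q : ℚ, Y j = (q : QHat) ∧ |(q:ℝ) - μ| < ε) :
    ∃ (x y : ℚ) (z : QHat), ValidT x y z ∧ (Sxy Y x y).Infinite ∧
      c < (x : ℝ) ∧ (y : ℝ) < d := by
  classical
  -- Step 1: an initial unit interval with infinitely many sequence points
  obtain ⟨N0, hN0⟩ := htail (1/2) (by norm_num)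
  set b : ℤ := ⌊μ⌋ with hb
  have hbl : (b : ℝ) ≤ μ := Int.floor_le μ
  have hbu : μ < (b : ℝ) + 1 := Int.lt_floor_add_one μ
  have hT : ({j : ℕ | ∃ q : ℚ, Y j = (q : QHat) ∧ |(q:ℝ) - μ| < 1/2}).Infinite := by
    refine Set.Infinite.mono ?_ (Set.Ici_infinite N0)
    intro j hj
    exact hN0 j hj
  have hsub : {j : ℕ | ∃ q : ℚ, Y j = (q : QHat) ∧ |(q:ℝ) - μ| < 1/2} ⊆
      (Sxy Y ((b - 1 : ℤ) : ℚ) ((b : ℤ) : ℚ) ∪ {j | Y j = (((b : ℤ) : ℚ) : QHat)}) ∪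
      (Sxy Y ((b : ℤ) : ℚ) ((b + 1 : ℤ) : ℚ) ∪ {j | Y j = (((b + 1 : ℤ) : ℚ) : QHat)}) ∪
      Sxy Y ((b + 1 : ℤ) : ℚ) ((b + 2 : ℤ) : ℚ) := by
    rintro j ⟨q, hq, hdist⟩
    have habs := abs_lt.mp hdist
    have hq1 : ((b - 1 : ℤ) : ℚ) < q := by
      have : ((b:ℝ) - 1) < (q:ℝ) := by linarith
      rw [show ((b - 1 : ℤ) : ℚ) = ((b:ℚ) - 1) by push_cast; ring]
      exact_mod_cast (by push_cast; linarith : (((b:ℚ) - 1 : ℚ) : ℝ) < ((q:ℚ):ℝ))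
    have hq2 : q < ((b + 2 : ℤ) : ℚ) := by
      rw [show ((b + 2 : ℤ) : ℚ) = ((b:ℚ) + 2) by push_cast; ring]
      exact_mod_cast (by push_cast; linarith : ((q:ℚ):ℝ) < (((b:ℚ) + 2 : ℚ) : ℝ))
    rcases lt_trichotomy q ((b : ℤ) : ℚ) with h | h | h
    · exact Or.inl (Or.inl (Or.inl ⟨q, hq, hq1, h⟩))
    · exact Or.inl (Or.inl (Or.inr (by rw [← h]; exact hq)))
    · rcases lt_trichotomy q ((b + 1 : ℤ) : ℚ) with h' | h' | h'
      · exact Or.inl (Or.inr (Or.inl ⟨q, hq, h, h'⟩))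
      · exact Or.inl (Or.inr (Or.inr (by rw [← h']; exact hq)))
      · exact Or.inr ⟨q, hq, h', hq2⟩
  have hsing : ∀ p : ℚ, ({j | Y j = ((p : ℚ) : QHat)} : Set ℕ).Finite := by
    intro p
    apply Set.Subsingleton.finite
    intro a ha b' hb'
    exact hYinj (ha.trans hb'.symm)
  have hone : (Sxy Y ((b - 1 : ℤ) : ℚ) ((b : ℤ) : ℚ)).Infinite ∨
      (Sxy Y ((b : ℤ) : ℚ) ((b + 1 : ℤ) : ℚ)).Infinite ∨
      (Sxy Y ((b + 1 : ℤ) : ℚ) ((b + 2 : ℤ) : ℚ)).Infinite := by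
    by_contra hcon
    push_neg at hcon
    obtain ⟨hf1, hf2, hf3⟩ := hcon
    exact hT (Set.Finite.subset ((((hf1.union (hsing _)).union
      ((hf2.union (hsing _)))).union hf3)) hsub)
  -- package: in each case we have a valid initial state
  have hinit : ∃ (x0 y0 : ℚ) (z0 : QHat), ValidT x0 y0 z0 ∧ (Sxy Y x0 y0).Infinite := by
    rcases hone with h | h | h
    · refine ⟨((b - 1 : ℤ) : ℚ), ((b : ℤ) : ℚ), none, ?_, h⟩
      have h2 := valid_int (b - 1)
      rwa [show ((b - 1 + 1 : ℤ) : ℚ) = ((b : ℤ) : ℚ) by push_cast; ring] at h2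
    · exact ⟨((b : ℤ) : ℚ), ((b + 1 : ℤ) : ℚ), none, valid_int b, h⟩
    · refine ⟨((b + 1 : ℤ) : ℚ), ((b + 2 : ℤ) : ℚ), none, ?_, h⟩
      have h2 := valid_int (b + 1)
      rwa [show ((b + 1 + 1 : ℤ) : ℚ) = ((b + 2 : ℤ) : ℚ) by push_cast; ring] at h2
  obtain ⟨x0, y0, z0, hv0, hinf0⟩ := hinit
  -- Step 2: descend until the interval is small
  set ε : ℝ := min (μ - c) (d - μ) with hε
  have hεpos : 0 < ε := by
    rw [hε]; exact lt_min (by linarith) (by linarith)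
  obtain ⟨k, hk⟩ := exists_nat_gt (2 / ε)
  obtain ⟨x, y, z, hv, hinf, hprod, _, _⟩ := find_states hYinj hv0 hinf0 k
  have hxy := hv.1
  -- Step 3: position the interval using a far tail point inside it
  obtain ⟨NT, hNT⟩ := htail (ε/2) (by positivity)
  obtain ⟨j, hjS, hjN⟩ := hinf.exists_gt NT
  obtain ⟨q, hq, hq1, hq2⟩ := hjS
  obtain ⟨q', hq', hq'dist⟩ := hNT j hjN.le
  have hqq : q' = q := by
    rw [hq] at hq'
    exact (Option.some_injective ℚ hq').symm
  rw [hqq] at hq'dist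
  have habs := abs_lt.mp hq'dist
  -- lengths
  have hB : (0:ℝ) < (x.den:ℝ) * (y.den:ℝ) := by positivity
  have hBk : (k:ℝ) ≤ (x.den:ℝ) * (y.den:ℝ) := by exact_mod_cast hprod
  have hident : ((y:ℝ) - (x:ℝ)) * ((x.den:ℝ) * (y.den:ℝ)) = 1 := by
    exact_mod_cast congrArg (fun t : ℚ => (t : ℝ)) hxy.sub_eq
  have hεk : 2 < ε * k := by
    rw [div_lt_iff₀ hεpos] at hk; linarith
  have hεB : 2 < ε * ((x.den:ℝ) * (y.den:ℝ)) := by nlinarith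
  have hlen : (y:ℝ) - (x:ℝ) < ε/2 := by nlinarith
  have hxq : (x:ℝ) < (q:ℝ) := by exact_mod_cast hq1
  have hqy : (q:ℝ) < (y:ℝ) := by exact_mod_cast hq2
  have hεc : ε ≤ μ - c := min_le_left _ _
  have hεd : ε ≤ d - μ := min_le_right _ _
  exact ⟨x, y, z, hv, hinf, by linarith, by linarith⟩

end Find

section Topo
open scoped OnePoint

lemma toRHat_some (q : ℚ) : toRHat ((q : ℚ) : QHat) = ((q : ℝ) : RHat) := rfl
lemma toRHat_none : toRHat (none : QHat) = (∞ : RHat) := rfl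

lemma mem_coe_image {X : QHat} {s : Set ℝ}
    (h : toRHat X ∈ (fun w : ℝ => (w : RHat)) '' s) :
    ∃ q : ℚ, X = ((q : ℚ) : QHat) ∧ (q : ℝ) ∈ s := by
  cases X with
  | none =>
      exfalso
      exact OnePoint.infty_notMem_image_coe (by exact_mod_cast h)
  | some q =>
      obtain ⟨w, hw, hweq⟩ := h
      refine ⟨q, rfl, ?_⟩
      have : w = (q : ℝ) := OnePoint.coe_eq_coe.mp hweq
      rwa [this] at hw

lemma coe_image_mem_nhds {s : Set ℝ} (hs : IsOpen s) {r : ℝ} (hr : r ∈ s) :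
    (fun w : ℝ => (w : RHat)) '' s ∈ 𝓝 ((r : ℝ) : RHat) :=
  (OnePoint.isOpenMap_coe s hs).mem_nhds ⟨r, hr, rfl⟩

/-- Boundedness plus accumulation near a finite point gives an end invariant. -/
lemma accA_coe {φ : QHat → ℂ} {K : ℝ} (hK : 0 < K) {r : ℝ}
    (hacc : ∀ W ∈ 𝓝 ((r : ℝ) : RHat), ∃ X : QHat,
      toRHat X ∈ W ∧ toRHat X ≠ ((r : ℝ) : RHat) ∧ ‖φ X‖ ≤ K) :
    IsEndInv φ ((r : ℝ) : RHat) := by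
  classical
  have step : ∀ δ : ℝ, 0 < δ → ∃ p : ℚ, ((p : ℝ) ≠ r ∧ ‖φ ((p:ℚ) : QHat)‖ ≤ K)
      ∧ |(p : ℝ) - r| < δ := by
    intro δ hδ
    obtain ⟨X, hXW, hXne, hXb⟩ := hacc ((fun w : ℝ => (w : RHat)) '' Set.Ioo (r - δ) (r + δ))
      (coe_image_mem_nhds isOpen_Ioo (by constructor <;> linarith))
    obtain ⟨q, rfl, hq⟩ := mem_coe_image hXW
    refine ⟨q, ⟨?_, hXb⟩, ?_⟩
    · intro hins
      exact hXne (by rw [toRHat_some, hins])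
    · obtain ⟨h1, h2⟩ := hq
      rw [abs_lt]; constructor <;> linarith
  -- the subtype of admissible rationals
  let T := {p : ℚ // (p : ℝ) ≠ r ∧ ‖φ ((p:ℚ) : QHat)‖ ≤ K}
  have step' : ∀ t : T, ∃ t' : T, |(t'.1 : ℝ) - r| < |(t.1 : ℝ) - r| / 2 := by
    rintro ⟨p, hp1, hp2⟩
    have hpos : 0 < |(p : ℝ) - r| := abs_pos.mpr (sub_ne_zero.mpr hp1)
    obtain ⟨p', hp', hd⟩ := step (|(p : ℝ) - r| / 2) (by linarith)
    exact ⟨⟨p', hp'⟩, hd⟩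
  obtain ⟨p0, hp0⟩ := step 1 one_pos
  choose nxt hnxt using step'
  let f : ℕ → T := fun n => Nat.rec ⟨p0, hp0.1⟩ (fun _ t => nxt t) n
  have hstep : ∀ n : ℕ, |((f (n+1)).1 : ℝ) - r| < |((f n).1 : ℝ) - r| / 2 := fun n => hnxt (f n)
  set d : ℕ → ℝ := fun n => |((f n).1 : ℝ) - r| with hd
  have hdpos : ∀ n, 0 < d n := fun n => abs_pos.mpr (sub_ne_zero.mpr (f n).2.1)
  have hdanti : StrictAnti d := by
    apply strictAnti_nat_of_succ_lt
    intro n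
    have := hstep n
    have := hdpos n
    simp only [hd] at *
    linarith
  have hgeom : ∀ n, d n ≤ d 0 * (1/2)^n := by
    intro n
    induction n with
    | zero => simp
    | succ n IH =>
        have h1 := hstep n
        have h2 : (0:ℝ) < (1/2)^n := by positivity
        calc d (n+1) ≤ d n / 2 := (hstep n).le
          _ ≤ (d 0 * (1/2)^n) / 2 := by linarith
          _ = d 0 * (1/2)^(n+1) := by ring
  have hdtend : Tendsto d atTop (𝓝 0) := by
    have hbase : Tendsto (fun n : ℕ => d 0 * (1/2)^n) atTop (𝓝 0) := by
      have := tendsto_pow_atTop_nhds_zero_of_lt_one (by norm_num : (0:ℝ) ≤ 1/2)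
        (by norm_num : (1:ℝ)/2 < 1)
      simpa using this.const_mul (d 0)
    exact squeeze_zero (fun n => (hdpos n).le) hgeom hbase
  have htendR : Tendsto (fun n => ((f n).1 : ℝ)) atTop (𝓝 r) := by
    rw [tendsto_iff_dist_tendsto_zero]
    simpa [Real.dist_eq, hd] using hdtend
  refine ⟨K, hK, fun n => (((f n).1 : ℚ) : QHat), ?_, ?_, fun n => (f n).2.2⟩
  · intro a b hab
    have h1 : ((f a).1 : ℚ) = (f b).1 := Option.some_injective ℚ hab
    have h2 : d a = d b := by rw [hd]; simp [h1]
    exact hdanti.injective h2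
  · have hcont : Tendsto (fun w : ℝ => (w : RHat)) (𝓝 r) (𝓝 ((r:ℝ) : RHat)) :=
      (OnePoint.continuous_coe).tendsto r
    exact hcont.comp htendR

/-- Boundedness plus accumulation near `∞` gives an end invariant. -/
lemma accA_infty {φ : QHat → ℂ} {K : ℝ} (hK : 0 < K)
    (hacc : ∀ W ∈ 𝓝 (∞ : RHat), ∃ X : QHat,
      toRHat X ∈ W ∧ toRHat X ≠ (∞ : RHat) ∧ ‖φ X‖ ≤ K) :
    IsEndInv φ (∞ : RHat) := by
  classical
  have hVmem : ∀ t : ℝ, ((fun w : ℝ => (w : RHat)) '' Set.Icc (-t) t)ᶜ ∈ 𝓝 (∞ : RHat) := by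
    intro t
    refine IsOpen.mem_nhds ?_ ?_
    · rw [OnePoint.isOpen_compl_image_coe]
      exact ⟨isClosed_Icc, isCompact_Icc⟩
    · exact OnePoint.infty_notMem_image_coe
  have step : ∀ t : ℝ, ∃ p : ℚ, ‖φ ((p:ℚ) : QHat)‖ ≤ K ∧ t < |(p : ℝ)| := by
    intro t
    obtain ⟨X, hXW, hXne, hXb⟩ := hacc _ (hVmem t)
    cases X with
    | none => exact absurd rfl hXne
    | some q =>
        refine ⟨q, hXb, ?_⟩
        by_contra hc
        push_neg at hc
        exact hXW ⟨(q : ℝ), ⟨by linarith [neg_abs_le ((q:ℚ):ℝ)], le_trans (le_abs_self _) hc⟩, rfl⟩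
  let T := {p : ℚ // ‖φ ((p:ℚ) : QHat)‖ ≤ K}
  have step' : ∀ t : T, ∃ t' : T, |(t.1 : ℝ)| + 1 < |(t'.1 : ℝ)| := by
    rintro ⟨p, hp⟩
    obtain ⟨p', hp', hd⟩ := step (|(p : ℝ)| + 1)
    exact ⟨⟨p', hp'⟩, hd⟩
  obtain ⟨p0, hp0, _⟩ := step 0
  choose nxt hnxt using step'
  let f : ℕ → T := fun n => Nat.rec ⟨p0, hp0⟩ (fun _ t => nxt t) n
  have hstep : ∀ n : ℕ, |((f n).1 : ℝ)| + 1 < |((f (n+1)).1 : ℝ)| := fun n => hnxt (f n)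
  set d : ℕ → ℝ := fun n => |((f n).1 : ℝ)| with hd
  have hmono : StrictMono d := by
    apply strictMono_nat_of_lt_succ
    intro n
    have := hstep n
    simp only [hd] at *
    linarith
  have hgrow : ∀ n : ℕ, d 0 + n ≤ d n := by
    intro n
    induction n with
    | zero => simp
    | succ n IH =>
        have := hstep n
        push_cast
        simp only [hd] at *
        push_cast at IH
        linarith
  refine ⟨K, hK, fun n => (((f n).1 : ℚ) : QHat), ?_, ?_, fun n => (f n).2⟩
  · intro a b hab
    have h1 : ((f a).1 : ℚ) = (f b).1 := Option.some_injective ℚ hab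
    have h2 : d a = d b := by rw [hd]; simp [h1]
    exact hmono.injective h2
  · have hcc : Tendsto (fun n => ((f n).1 : ℝ)) atTop (Filter.coclosedCompact ℝ) := by
      rw [hasBasis_coclosedCompact.tendsto_right_iff]
      rintro s ⟨hscl, hsco⟩
      obtain ⟨R, hR⟩ := hsco.isBounded.subset_closedBall 0
      obtain ⟨N, hN⟩ := exists_nat_gt (R - d 0)
      rw [Filter.eventually_atTop]
      refine ⟨N, fun n hn => ?_⟩
      intro hmem
      have h1 := hR hmem
      rw [Real.closedBall_eq_Icc] at h1
      have h2 := hgrow n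
      have h3 : (N : ℝ) ≤ (n : ℝ) := by exact_mod_cast hn
      have h4 : |((f n).1 : ℝ)| ≤ R := by
        rw [abs_le]; constructor <;> [linarith [h1.1]; linarith [h1.2]]
      simp only [hd] at h2
      linarith
    exact OnePoint.tendsto_coe_infty.comp hcc

end Topo

section Final
open scoped OnePoint

lemma tendsto_tail {Ys : ℕ → QHat} {m : ℝ}
    (h : Tendsto (fun n => toRHat (Ys n)) atTop (𝓝 ((m : ℝ) : RHat))) :
    ∀ ε : ℝ, 0 < ε → ∃ N : ℕ, ∀ j ≥ N, ∃ q : ℚ, Ys j = ((q:ℚ) : QHat) ∧ |(q:ℝ) - m| < ε := by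
  intro ε hε
  have hV := coe_image_mem_nhds isOpen_Ioo
    (show m ∈ Set.Ioo (m - ε) (m + ε) by constructor <;> linarith)
  have hmem := h hV
  rw [Filter.mem_map, Filter.mem_atTop_sets] at hmem
  obtain ⟨N, hN⟩ := hmem
  refine ⟨N, fun j hj => ?_⟩
  obtain ⟨q, hq, hqI⟩ := mem_coe_image (hN j hj)
  refine ⟨q, hq, ?_⟩
  rw [abs_lt]
  obtain ⟨h1, h2⟩ := hqI
  constructor <;> linarith

theorem endInvs_isClosed_aux (κ : ℂ) (φ : QHat → ℂ) (hφ : IsFricke κ φ) :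
    IsClosed (endInvs φ) := by
  classical
  have hedge := hφ.2
  rw [← closure_subset_iff_isClosed]
  intro lam hlam
  by_cases hA : ∃ K : ℝ, 0 < K ∧ ∀ W ∈ 𝓝 lam, ∃ X : QHat,
      toRHat X ∈ W ∧ toRHat X ≠ lam ∧ ‖φ X‖ ≤ K
  · obtain ⟨K, hK, hacc⟩ := hA
    show IsEndInv φ lam
    cases lam with
    | none => exact accA_infty hK hacc
    | some r => exact accA_coe hK hacc
  · push_neg at hA
    have hW := hA 3 (by norm_num)
    obtain ⟨W, hWnhds, hWp⟩ := hW
    cases lam with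
    | some r =>
        have hWr : (fun w : ℝ => (w : RHat)) ⁻¹' W ∈ 𝓝 r :=
          ContinuousAt.preimage_mem_nhds (OnePoint.continuous_coe.continuousAt) hWnhds
        obtain ⟨δ, hδpos, hball⟩ := Metric.mem_nhds_iff.mp hWr
        rw [Real.ball_eq_Ioo] at hball
        set V : Set RHat := (fun w : ℝ => (w : RHat)) '' Set.Ioo (r - δ) (r + δ) with hV
        have hVopen : IsOpen V := OnePoint.isOpenMap_coe _ isOpen_Ioo
        have hVmem : (some r : RHat) ∈ V := ⟨r, by constructor <;> linarith, rfl⟩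
        obtain ⟨μ, hμV, hμE⟩ := mem_closure_iff.mp hlam V hVopen hVmem
        obtain ⟨m, hm, hmeq⟩ := hμV
        rw [← hmeq] at hμE
        by_cases hmr : m = r
        · rw [← hmr]; exact hμE
        · exfalso
          obtain ⟨K', hK'pos, Ys, hinj, htends, hbnd⟩ := hμE
          have htail := tendsto_tail htends
          have hregion : ∀ c d : ℝ, r - δ < c → d < r + δ → (r < c ∨ d < r) →
              ∀ q : ℚ, c < (q:ℝ) → (q:ℝ) < d → 3 < ‖φ ((q:ℚ) : QHat)‖ := by
            intro c d hc hd hside q hq1 hq2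
            refine hWp ((q : ℚ) : QHat) ?_ ?_
            · rw [toRHat_some]
              exact hball (⟨by linarith, by linarith⟩ : (q:ℝ) ∈ Set.Ioo (r - δ) (r + δ))
            · rw [toRHat_some]
              intro hcontra
              have : (q : ℝ) = r := OnePoint.coe_eq_coe.mp hcontra
              rcases hside with h | h <;> linarith
          rcases lt_or_gt_of_ne hmr with hlt | hgt
          · -- m < r : interval ((m + (r - δ))/2, (r + m)/2)
            obtain ⟨x, y, z, hv, hinf, hcx, hyd⟩ := find_interval hinj
              (show (m + (r - δ))/2 < m by obtain ⟨h1, h2⟩ := hm; linarith)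
              (show m < (r + m)/2 by linarith) htail
            refine entry hedge hinj hbnd hv ?_ hinf
            intro q hq1 hq2
            refine hregion ((m + (r - δ))/2) ((r + m)/2)
              (by obtain ⟨h1, h2⟩ := hm; linarith) (by linarith) (Or.inr (by linarith))
              q ?_ ?_
            · have : (x:ℝ) ≤ (q:ℝ) := by exact_mod_cast hq1
              linarith
            · have : (q:ℝ) ≤ (y:ℝ) := by exact_mod_cast hq2
              linarith
          · -- r < m : interval ((r + m)/2, (m + (r + δ))/2)
            obtain ⟨x, y, z, hv, hinf, hcx, hyd⟩ := find_interval hinj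
              (show (r + m)/2 < m by linarith)
              (show m < (m + (r + δ))/2 by obtain ⟨h1, h2⟩ := hm; linarith) htail
            refine entry hedge hinj hbnd hv ?_ hinf
            intro q hq1 hq2
            refine hregion ((r + m)/2) ((m + (r + δ))/2)
              (by linarith) (by obtain ⟨h1, h2⟩ := hm; linarith) (Or.inl (by linarith))
              q ?_ ?_
            · have : (x:ℝ) ≤ (q:ℝ) := by exact_mod_cast hq1
              linarith
            · have : (q:ℝ) ≤ (y:ℝ) := by exact_mod_cast hq2
              linarith
    | none =>
        obtain ⟨s, ⟨hscl, hsco⟩, hsub⟩ := (OnePoint.hasBasis_nhds_infty.mem_iff).mp hWnhds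
        obtain ⟨R, hR⟩ := hsco.isBounded.subset_closedBall 0
        set N : ℝ := |R| with hN
        have hsIcc : s ⊆ Set.Icc (-N) N := by
          intro w hw
          have := hR hw
          rw [Real.closedBall_eq_Icc] at this
          obtain ⟨h1, h2⟩ := this
          have h3 := le_abs_self R
          constructor
          · simp only [hN]; linarith
          · simp only [hN]; linarith
        set V : Set RHat := ((fun w : ℝ => (w : RHat)) '' Set.Icc (-N) N)ᶜ with hV
        have hVopen : IsOpen V := by
          rw [hV, OnePoint.isOpen_compl_image_coe]
          exact ⟨isClosed_Icc, isCompact_Icc⟩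
        have hVmem : (∞ : RHat) ∈ V := OnePoint.infty_notMem_image_coe
        have hVW : V ⊆ W := by
          intro v hv
          apply hsub
          cases v with
          | none => exact Or.inr rfl
          | some w =>
              refine Or.inl ⟨w, ?_, rfl⟩
              intro hws
              exact hv ⟨w, hsIcc hws, rfl⟩
        obtain ⟨μ, hμV, hμE⟩ := mem_closure_iff.mp hlam V hVopen hVmem
        cases μ with
        | none => exact hμE
        | some m =>
            exfalso
            have hmabs : N < |m| := by
              by_contra hc
              push_neg at hc
              exact hμV ⟨m, abs_le.mp hc, rfl⟩
            obtain ⟨K', hK'pos, Ys, hinj, htends, hbnd⟩ := hμE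
            have htail := tendsto_tail htends
            have hregion : ∀ c d : ℝ, (N < c ∨ d < -N) →
                ∀ q : ℚ, c < (q:ℝ) → (q:ℝ) < d → 3 < ‖φ ((q:ℚ) : QHat)‖ := by
              intro c d hside q hq1 hq2
              refine hWp ((q : ℚ) : QHat) ?_ ?_
              · apply hVW
                rw [toRHat_some]
                intro hcontra
                obtain ⟨w, hw, hweq⟩ := hcontra
                have : w = (q:ℝ) := OnePoint.coe_eq_coe.mp hweq
                rw [this] at hw
                obtain ⟨h1, h2⟩ := hw
                rcases hside with h | h <;> linarith
              · rw [toRHat_some]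
                exact OnePoint.coe_ne_infty _
            have hNnn : 0 ≤ N := abs_nonneg R
            rcases lt_abs.mp hmabs with hgt | hlt
            · -- N < m
              obtain ⟨x, y, z, hv, hinf, hcx, hyd⟩ := find_interval hinj
                (show (N + m)/2 < m by linarith)
                (show m < m + 1 by linarith) htail
              refine entry hedge hinj hbnd hv ?_ hinf
              intro q hq1 hq2
              refine hregion ((N + m)/2) (m + 1) (Or.inl (by linarith)) q ?_ ?_
              · have : (x:ℝ) ≤ (q:ℝ) := by exact_mod_cast hq1
                linarith
              · have : (q:ℝ) ≤ (y:ℝ) := by exact_mod_cast hq2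
                linarith
            · -- m < -N
              have hm' : m < -N := by linarith
              obtain ⟨x, y, z, hv, hinf, hcx, hyd⟩ := find_interval hinj
                (show m - 1 < m by linarith)
                (show m < (m + (-N))/2 by linarith) htail
              refine entry hedge hinj hbnd hv ?_ hinf
              intro q hq1 hq2
              refine hregion (m - 1) ((m + (-N))/2) (Or.inr (by linarith)) q ?_ ?_
              · have : (x:ℝ) ≤ (q:ℝ) := by exact_mod_cast hq1
                linarith
              · have : (q:ℝ) ≤ (y:ℝ) := by exact_mod_cast hq2
                linarith

end Final


/-- For every Fricke trace map `φ`, the set `ℰ(φ)` is closed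
in `ℝ̂`. -/
theorem endInvs_isClosed (κ : ℂ) (φ : QHat → ℂ) (hφ : IsFricke κ φ) :
    IsClosed (endInvs φ) :=
  endInvs_isClosed_aux κ φ hφ

end TWZ
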